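/- arXiv:1204.0645 — 3 statements merged into one kernel-verified Lean document; each statement's English description precedes it below -/
import Mathlib

section
/- For vectors v_1,...,v_r in R^r and w_1,...,w_r in R^r, the Grassmann–Plücker relation holds: det(v_1,...,v_r)·det(w_1,...,w_r) = Σ_{s=1}^{r} det(w_s, v_2,...,v_r)·det(w_1,...,w_{s-1}, v_1, w_{s+1},...,w_r). -/
theorem grassmann_pluecker_relation (r : ℕ) [NeZero r] (v w : Fin r → Fin r → ℝ) :
    Matrix.det (Matrix.of fun a b => v b a) * Matrix.det (Matrix.of fun a b => w b a) =
      ∑ s : Fin r,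
        Matrix.det (Matrix.of fun a b => Function.update v 0 (w s) b a) *
          Matrix.det (Matrix.of fun a b => Function.update w s (v 0) b a) := by
  have detT : ∀ u : Fin r → Fin r → ℝ,
      (Matrix.of fun a b => u b a) = Matrix.transpose (Matrix.of u) := fun _ => rfl
  suffices h : (Matrix.of v).det * (Matrix.of w).det =
      ∑ s : Fin r, (Matrix.of (Function.update v 0 (w s))).det *
        (Matrix.of (Function.update w s (v 0))).det by
    rw [detT v, detT w, Matrix.det_transpose, Matrix.det_transpose, h]
    refine Finset.sum_congr rfl fun s _ => ?_
    rw [detT (Function.update v 0 (w s)), detT (Function.update w s (v 0)),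
      Matrix.det_transpose, Matrix.det_transpose]
  set V : Matrix (Fin r) (Fin r) ℝ := Matrix.of v with hV
  set W : Matrix (Fin r) (Fin r) ℝ := Matrix.of w with hW
  have hup : ∀ (u : Fin r → Fin r → ℝ) (i : Fin r) (x : Fin r → ℝ),
      Matrix.of (Function.update u i x) = (Matrix.of u).updateRow i x := fun _ _ _ => rfl
  simp only [hup]
  set c : Fin r → ℝ := Matrix.cramer (Matrix.transpose W) (v 0) with hc
  have hcs : ∀ s, c s = (W.updateRow s (v 0)).det := by
    intro s
    rw [hc, Matrix.cramer_apply, Matrix.updateCol_transpose, Matrix.det_transpose]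
  have hcramer : Matrix.mulVec (Matrix.transpose W) c = W.det • v 0 := by
    rw [hc, Matrix.mulVec_cramer, Matrix.det_transpose]
  have hcomb : (W.det • v 0 : Fin r → ℝ) = ∑ s, c s • w s := by
    rw [← hcramer]
    funext a
    simp [Matrix.mulVec, dotProduct, Matrix.transpose_apply, mul_comm,
      Finset.sum_apply, hW]
  have key : W.det * V.det = ∑ s, c s * (V.updateRow 0 (w s)).det := by
    have h0 : V 0 = v 0 := rfl
    calc W.det * V.det = (V.updateRow 0 (W.det • v 0)).det := by
          rw [Matrix.det_updateRow_smul,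
            show V.updateRow 0 (v 0) = V from Matrix.updateRow_eq_self V 0]
      _ = (V.updateRow 0 (∑ s, c s • w s)).det := by rw [hcomb]
      _ = ∑ s, c s * (V.updateRow 0 (w s)).det := by
          have h1 : ∀ x : Fin r → ℝ, (V.updateRow 0 x).det =
              Matrix.detRowAlternating.toMultilinearMap (Function.update V 0 x) := fun _ => rfl
          simp only [h1]
          rw [MultilinearMap.map_update_sum (f := Matrix.detRowAlternating.toMultilinearMap) (m := V)]
          refine Finset.sum_congr rfl fun s _ => ?_
          simpa using Matrix.detRowAlternating.toMultilinearMap.map_update_smul V 0 (c s) (w s)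
  rw [mul_comm, key]
  exact Finset.sum_congr rfl fun s _ => by rw [hcs s, mul_comm]
end

section
/- Let v_1,...,v_r ∈ R^r and w_1,...,w_r ∈ R^r. If the r+1 products det(w_s,v_2,...,v_r)·det(w_1,...,w_{s-1},v_1,w_{s+1},...,w_r) are all nonnegative for s=1,...,r, then det(v_1,...,v_r)·det(w_1,...,w_r) ≥ 0. -/
theorem grassmann_pluecker_sign_condition (r : ℕ) [NeZero r] (v w : Fin r → Fin r → ℝ)
    (h : ∀ s : Fin r,
      0 ≤ Matrix.det (Matrix.of fun a b => Function.update v 0 (w s) b a) *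
            Matrix.det (Matrix.of fun a b => Function.update w s (v 0) b a)) :
    0 ≤ Matrix.det (Matrix.of fun a b => v b a) * Matrix.det (Matrix.of fun a b => w b a) := by
  classical
  rw [show (Matrix.of fun a b => v b a) = (Matrix.of v).transpose from rfl,
    show (Matrix.of fun a b => w b a) = (Matrix.of w).transpose from rfl,
    Matrix.det_transpose, Matrix.det_transpose]
  set W : Matrix (Fin r) (Fin r) ℝ := Matrix.of w with hW
  by_cases hdet : W.det = 0
  · rw [hdet, mul_zero]
  · set c : Fin r → ℝ := Matrix.vecMul (v 0) W⁻¹ with hc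
    have hv0 : v 0 = ∑ t, c t • w t := by
      funext j
      have hcw : Matrix.vecMul c W = v 0 := by
        rw [hc, Matrix.vecMul_vecMul, Matrix.nonsing_inv_mul W (isUnit_iff_ne_zero.mpr hdet),
          Matrix.vecMul_one]
      rw [← hcw]
      simp [Matrix.vecMul, dotProduct, Finset.sum_apply, mul_comm, hW]
    set D : AlternatingMap ℝ (Fin r → ℝ) ℝ (Fin r) := Matrix.detRowAlternating with hD
    have hdetrow : ∀ u : Fin r → Fin r → ℝ, Matrix.det (Matrix.of u) = D u := fun _ => rfl
    have key1 : Matrix.det (Matrix.of v) = ∑ t, c t * D (Function.update v 0 (w t)) := by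
      have hv : v = Function.update v 0 (v 0) := by simp
      rw [hdetrow]
      conv_lhs => rw [hv, hv0]
      rw [D.map_update_sum]
      exact Finset.sum_congr rfl fun t _ => by rw [D.map_update_smul]; simp
    have key2 : ∀ s : Fin r, D (Function.update w s (v 0)) = c s * W.det := by
      intro s
      conv_lhs => rw [hv0]
      rw [D.map_update_sum, Finset.sum_eq_single s]
      · rw [D.map_update_smul, Function.update_eq_self, smul_eq_mul, ← hdetrow w]
      · intro t _ hts
        rw [D.map_update_smul]
        have hz : D (Function.update w s (w t)) = 0 := by
          apply D.map_eq_zero_of_eq _ (i := s) (j := t)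
          · rw [Function.update_self, Function.update_of_ne hts]
          · exact fun e => hts e.symm
        rw [hz, smul_zero]
      · simp
    have key3 : Matrix.det (Matrix.of v) * W.det
        = ∑ t, D (Function.update v 0 (w t)) * D (Function.update w t (v 0)) := by
      rw [key1, Finset.sum_mul]
      exact Finset.sum_congr rfl fun t _ => by rw [key2 t]; ring
    rw [key3]
    refine Finset.sum_nonneg fun t _ => ?_
    have ht := h t
    rw [show (Matrix.of fun a b => Function.update v 0 (w t) b a)
          = (Matrix.of (Function.update v 0 (w t))).transpose from rfl,
        show (Matrix.of fun a b => Function.update w t (v 0) b a)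
          = (Matrix.of (Function.update w t (v 0))).transpose from rfl,
        Matrix.det_transpose, Matrix.det_transpose, hdetrow, hdetrow] at ht
    exact ht
end

section
/- Let b = (b_1,...,b_r) ∈ Λ(n,r) and suppose v_{b_1} = e_1, ..., v_{b_r} = e_r are the standard basis vectors of R^r, where the remaining v_i have entries that are variables. Then for any (i_1,...,i_r) ∈ Λ(n,r), the polynomial det(v_{i_1},...,v_{i_r}) in the variable entries has total degree equal to |{b_1,...,b_r} \ {i_1,...,i_r}|. -/
open scoped Classical in
/-- The matrix entries after fixing the basis `b` to the standard basis vectors: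
column `b m` is the `m`-th standard basis vector, and all other entries are
independent polynomial variables. -/
noncomputable def basisFixedEntry (n r : ℕ) (b : Fin r → Fin n) (l : Fin n) (k : Fin r) :
    MvPolynomial (Fin n × Fin r) ℝ :=
  if ∃ m, b m = l ∧ m = k then 1
  else if ∃ m, b m = l then 0
  else MvPolynomial.X (l, k)

/-- A product of distinct variables indexed by a finset is a monomial. -/
private lemma prodX_eq_monomial {ι σ : Type*} (F : Finset ι) (f : ι → σ) :
    ∏ i ∈ F, (MvPolynomial.X (f i) : MvPolynomial σ ℝ) =
      MvPolynomial.monomial (∑ i ∈ F, Finsupp.single (f i) 1) 1 := by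
  classical
  induction F using Finset.induction with
  | empty => simp
  | @insert a s h ih =>
      rw [Finset.prod_insert h, ih, Finset.sum_insert h, MvPolynomial.X,
        MvPolynomial.monomial_mul, one_mul]

private lemma degSum {ι σ : Type*} (F : Finset ι) (f : ι → σ) :
    ((∑ i ∈ F, Finsupp.single (f i) 1 : σ →₀ ℕ).sum fun _ e => e) = F.card := by
  classical
  induction F using Finset.induction with
  | empty => simp
  | @insert a s h ih =>
      rw [Finset.sum_insert h,
        Finsupp.sum_add_index' (fun _ => rfl) (fun _ _ _ => rfl), ih,
        Finsupp.sum_single_index rfl, Finset.card_insert_of_notMem h]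
      omega

theorem degree_of_determinant_after_basis_fix (n r : ℕ) (b : Fin r → Fin n)
    (hb : StrictMono b) (t : Fin r → Fin n) (ht : StrictMono t) :
    (Matrix.det (Matrix.of fun k s => basisFixedEntry n r b (t s) k)).totalDegree =
      (Finset.image b Finset.univ \ Finset.image t Finset.univ).card := by
  classical
  have hbi : Function.Injective b := hb.injective
  have hti : Function.Injective t := ht.injective
  set S : Finset (Fin r) := Finset.univ.filter (fun s => ∃ m, b m = t s) with hSdef
  have hSmem : ∀ s, s ∈ S ↔ ∃ m, b m = t s := by
    intro s; simp [hSdef]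
  -- the function picking, for `s ∈ S`, the index `m` with `b m = t s`
  set g : Fin r → Fin r := fun s => if h : ∃ m, b m = t s then h.choose else s with hgdef
  have hg : ∀ s ∈ S, b (g s) = t s := by
    intro s hs
    have h := (hSmem s).1 hs
    simp only [hgdef, dif_pos h]
    exact h.choose_spec
  -- cardinality bookkeeping
  have hcard : (Finset.image b Finset.univ \ Finset.image t Finset.univ).card = Sᶜ.card := by
    have hinter : Finset.image b Finset.univ ∩ Finset.image t Finset.univ = S.image t := by
      ext x
      simp only [Finset.mem_inter, Finset.mem_image, hSdef, Finset.mem_filter,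
        Finset.mem_univ, true_and]
      constructor
      · rintro ⟨⟨m, hm⟩, ⟨s, hs⟩⟩; exact ⟨s, ⟨m, by rw [hm, hs]⟩, hs⟩
      · rintro ⟨s, ⟨m, hm⟩, hs⟩; exact ⟨⟨m, by rw [hm, hs]⟩, ⟨s, hs⟩⟩
    have h1 := Finset.card_sdiff_add_card_inter (Finset.image b Finset.univ)
      (Finset.image t Finset.univ)
    rw [hinter, Finset.card_image_of_injective _ hbi,
      Finset.card_image_of_injOn hti.injOn] at h1
    have h2 : Sᶜ.card = Fintype.card (Fin r) - S.card := Finset.card_compl S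
    have h3 : S.card ≤ r := by
      simpa using Finset.card_le_univ S
    simp only [Finset.card_univ, Fintype.card_fin] at h1 h2
    omega
  rw [hcard]
  -- the exponent of the monomial attached to a permutation
  set u : Equiv.Perm (Fin r) → (Fin n × Fin r →₀ ℕ) :=
    fun σ => ∑ s ∈ Sᶜ, Finsupp.single (t s, σ s) 1 with hudef
  have hgoodprod : ∀ σ : Equiv.Perm (Fin r), (∀ s ∈ S, σ s = g s) →
      (∏ i, basisFixedEntry n r b (t i) (σ i)) = MvPolynomial.monomial (u σ) 1 := by
    intro σ hσ
    rw [← Finset.prod_mul_prod_compl S]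
    have h1 : ∏ i ∈ S, basisFixedEntry n r b (t i) (σ i) = 1 :=
      Finset.prod_eq_one fun s hs => by
        unfold basisFixedEntry
        rw [if_pos ⟨g s, hg s hs, (hσ s hs).symm⟩]
    have h2 : ∏ i ∈ Sᶜ, basisFixedEntry n r b (t i) (σ i) =
        ∏ i ∈ Sᶜ, MvPolynomial.X (t i, σ i) :=
      Finset.prod_congr rfl fun s hs => by
        have hns : ¬ ∃ m, b m = t s := fun h => (Finset.mem_compl.1 hs) ((hSmem s).2 h)
        unfold basisFixedEntry
        rw [if_neg (fun ⟨m, hm, _⟩ => hns ⟨m, hm⟩), if_neg hns]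
    rw [h1, h2, one_mul, prodX_eq_monomial]
  have hbadprod : ∀ σ : Equiv.Perm (Fin r), ¬(∀ s ∈ S, σ s = g s) →
      (∏ i, basisFixedEntry n r b (t i) (σ i)) = 0 := by
    intro σ hσ
    push_neg at hσ
    obtain ⟨s, hs, hne⟩ := hσ
    apply Finset.prod_eq_zero (Finset.mem_univ s)
    unfold basisFixedEntry
    rw [if_neg, if_pos ((hSmem s).1 hs)]
    rintro ⟨m, hm, rfl⟩
    exact hne (hbi (hm.trans (hg s hs).symm))
  -- injectivity of σ ↦ u σ on good permutations
  have huinj : ∀ σ τ : Equiv.Perm (Fin r), (∀ s ∈ S, σ s = g s) → (∀ s ∈ S, τ s = g s) →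
      u σ = u τ → σ = τ := by
    intro σ τ hσ hτ huv
    apply Equiv.ext
    intro s
    by_cases hs : s ∈ S
    · rw [hσ s hs, hτ s hs]
    · have hs' : s ∈ Sᶜ := Finset.mem_compl.2 hs
      have h1 : u σ (t s, σ s) ≠ 0 := by
        rw [hudef]
        simp only [Finsupp.finset_sum_apply]
        have : (1 : ℕ) ≤ ∑ s' ∈ Sᶜ, (Finsupp.single (t s', σ s') 1) (t s, σ s) := by
          refine Finset.single_le_sum (fun _ _ => Nat.zero_le _) hs' |>.trans_eq' ?_
          simp
        omega
      have h2 : u τ (t s, σ s) ≠ 0 := by rw [← huv]; exact h1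
      rw [hudef] at h2
      simp only [Finsupp.finset_sum_apply] at h2
      obtain ⟨s', hs'', hne⟩ := Finset.exists_ne_zero_of_sum_ne_zero h2
      rw [Finsupp.single_apply] at hne
      split_ifs at hne with heq
      · obtain ⟨ht1, ht2⟩ := Prod.mk.injEq .. ▸ heq
        have h3 : s' = s := hti ht1
        rw [← h3, ht2, h3]
      · exact absurd rfl hne
  -- a good permutation exists
  have hginj : Set.InjOn g S := fun s hs s' hs' h => hti (by rw [← hg s hs, ← hg s' hs', h])
  set T : Finset (Fin r) := S.image g with hTdef
  have hcardT : T.card = S.card := Finset.card_image_of_injOn hginj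
  have hexists : ∃ σ0 : Equiv.Perm (Fin r), ∀ s ∈ S, σ0 s = g s := by
    have hbij : Function.Bijective (fun x : {x // x ∈ S} =>
        (⟨g x.1, Finset.mem_image_of_mem g x.2⟩ : {x // x ∈ T})) := by
      rw [Fintype.bijective_iff_injective_and_card]
      exact ⟨fun x y h => Subtype.ext (hginj x.2 y.2 (congrArg Subtype.val h)),
        by simp [Fintype.card_coe, hcardT]⟩
    have hce : Fintype.card {x // ¬ x ∈ S} = Fintype.card {x // ¬ x ∈ T} := by
      rw [Fintype.card_subtype_compl, Fintype.card_subtype_compl]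
      congr 1
      simp [Fintype.card_coe, hcardT]
    refine ⟨(Equiv.sumCompl (· ∈ S)).symm.trans
      (((Equiv.ofBijective _ hbij).sumCongr (Fintype.equivOfCardEq hce)).trans
        (Equiv.sumCompl (· ∈ T))), fun s hs => ?_⟩
    simp [Equiv.sumCompl_symm_apply_of_pos hs, Equiv.ofBijective]
  obtain ⟨σ0, hσ0⟩ := hexists
  -- main computation
  rw [Matrix.det_apply]
  simp only [Matrix.of_apply]
  refine le_antisymm ?_ ?_
  · refine (MvPolynomial.totalDegree_finset_sum _ _).trans (Finset.sup_le fun σ _ => ?_)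
    refine (MvPolynomial.totalDegree_smul_le _ _).trans ?_
    by_cases hσ : ∀ s ∈ S, σ s = g s
    · rw [hgoodprod σ hσ]
      exact (MvPolynomial.totalDegree_monomial_le _ _).trans_eq (degSum _ _)
    · rw [hbadprod σ hσ]
      simp
  · have hcoeff : MvPolynomial.coeff (u σ0)
        (∑ σ : Equiv.Perm (Fin r), Equiv.Perm.sign σ • ∏ i, basisFixedEntry n r b (t i) (σ i))
        ≠ 0 := by
      rw [MvPolynomial.coeff_sum]
      rw [Finset.sum_eq_single σ0]
      · rw [hgoodprod σ0 hσ0, MvPolynomial.coeff_smul, MvPolynomial.coeff_monomial,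
          if_pos rfl]
        rcases Int.units_eq_one_or (Equiv.Perm.sign σ0) with h | h <;> simp [h]
      · intro σ _ hne
        by_cases hσ : ∀ s ∈ S, σ s = g s
        · rw [hgoodprod σ hσ, MvPolynomial.coeff_smul, MvPolynomial.coeff_monomial,
            if_neg, smul_zero]
          exact fun h => hne (huinj σ σ0 hσ hσ0 h)
        · rw [hbadprod σ hσ]
          simp
      · intro h
        exact absurd (Finset.mem_univ σ0) h
    have hle := MvPolynomial.le_totalDegree (MvPolynomial.mem_support_iff.2 hcoeff)
    rw [hudef] at hle
    rw [degSum Sᶜ (fun s => (t s, σ0 s))] at hle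
    exact hle
end
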